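/- For every d×d complex unitary matrix U one has |Tr(U†U*)| ≤ d, and equality |Tr(U†U*)| = d holds if and only if there exist θ ∈ ℝ and a d×d real orthogonal matrix O such that U = e^{iθ}·O. Consequently the imaginarity-generating power Ī(U) = (d² − |Tr(U†U*)|²)/(2d(d+2)) satisfies Ī(U) ≥ 0, with Ī(U) = 0 if and only if U equals a real orthogonal matrix up to a global phase. -/

import Mathlib

open Matrix

noncomputable section
open Finset

lemma re_eq_abs_imp {w : ℂ} (h : w.re = ‖w‖) : ((‖w‖ : ℝ) : ℂ) = w := by
  have h2 : ‖w‖ ^ 2 = w.re ^ 2 + w.im ^ 2 := by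
    rw [Complex.sq_norm, Complex.normSq_apply]; ring
  rw [h] at h2
  have h3 : w.im ^ 2 = 0 := by linarith
  have him : w.im = 0 := pow_eq_zero_iff (two_ne_zero) |>.mp h3
  exact Complex.ext (by simp [← h]) (by simp [him])

lemma sq_real_imp {w : ℂ} {r : ℝ} (h : w ^ 2 = ((r : ℂ)) ^ 2) : w.im = 0 := by
  have hre : w.re ^ 2 - w.im ^ 2 = r ^ 2 := by
    have := congrArg Complex.re h
    simpa [pow_two, Complex.mul_re, Complex.mul_im] using this
  have him : w.re * w.im + w.im * w.re = 0 := by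
    have := congrArg Complex.im h
    simpa [pow_two, Complex.mul_re, Complex.mul_im] using this
  have him2 : w.re * w.im = 0 := by linarith
  rcases mul_eq_zero.mp him2 with h1 | h1
  · have h3 : w.im ^ 2 = 0 := by nlinarith [sq_nonneg r]
    exact pow_eq_zero_iff (two_ne_zero) |>.mp h3
  · exact h1

lemma exists_phase {ι : Type*} [Fintype ι] (z : ι → ℂ)
    (h : ‖∑ i, z i‖ = ∑ i, ‖z i‖) :
    ∃ c : ℂ, ‖c‖ = 1 ∧ ∀ i, z i = ((‖z i‖ : ℝ) : ℂ) * c := by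
  by_cases hS : (∑ i, z i) = 0
  · refine ⟨1, by simp, fun i => ?_⟩
    have h0 : ∑ i, ‖z i‖ = 0 := by rw [← h, hS, norm_zero]
    have : ∀ j ∈ (univ : Finset ι), ‖z j‖ = 0 := by
      intro j hj
      exact (Finset.sum_eq_zero_iff_of_nonneg (fun j _ => norm_nonneg _)).mp h0 j hj
    have hz : z i = 0 := by simpa using this i (mem_univ i)
    simp [hz]
  · set S := ∑ i, z i with hSdef
    set c : ℂ := S / ‖S‖ with hc
    have hSne : (‖S‖ : ℂ) ≠ 0 := by
      simpa using (norm_pos_iff.mpr hS).ne'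
    have habsc : ‖c‖ = 1 := by
      rw [hc, norm_div, Complex.norm_real, Real.norm_eq_abs, abs_of_nonneg (norm_nonneg S),
        div_self (norm_pos_iff.mpr hS).ne']
    refine ⟨c, habsc, fun i => ?_⟩
    have hnsq : ((Complex.normSq S : ℝ) : ℂ) = (‖S‖ : ℂ) * ‖S‖ := by
      norm_cast
      rw [← Complex.sq_norm]; ring
    have hcS : (starRingEnd ℂ) c * S = (‖S‖ : ℂ) := by
      rw [hc, map_div₀, Complex.conj_ofReal, div_mul_eq_mul_div, mul_comm, Complex.mul_conj,
        hnsq, mul_div_assoc, div_self hSne, mul_one]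
    have hle : ∀ j ∈ (univ : Finset ι), ((starRingEnd ℂ) c * z j).re ≤ ‖z j‖ := by
      intro j _
      calc ((starRingEnd ℂ) c * z j).re ≤ ‖(starRingEnd ℂ) c * z j‖ :=
            Complex.re_le_norm _
        _ = ‖z j‖ := by
            rw [norm_mul, Complex.norm_conj, habsc, one_mul]
    have hsum : ∑ j, ((starRingEnd ℂ) c * z j).re = ∑ j, ‖z j‖ := by
      rw [← h]
      have : ∑ j, ((starRingEnd ℂ) c * z j).re = ((starRingEnd ℂ) c * S).re := by
        rw [hSdef, Finset.mul_sum, Complex.re_sum]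
      rw [this, hcS, Complex.ofReal_re]
    have heach := (Finset.sum_eq_sum_iff_of_le hle).mp hsum i (mem_univ i)
    have habs : ‖(starRingEnd ℂ) c * z i‖ = ‖z i‖ := by
      rw [norm_mul, Complex.norm_conj, habsc, one_mul]
    have hkey : ((‖z i‖ : ℝ) : ℂ) = (starRingEnd ℂ) c * z i := by
      rw [← habs]
      exact re_eq_abs_imp (by rw [habs, heach])
    have hcc : c * (starRingEnd ℂ) c = 1 := by
      rw [Complex.mul_conj]
      have : Complex.normSq c = 1 := by
        rw [← Complex.sq_norm, habsc]; ring
      rw [this]; norm_num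
    calc z i = (c * (starRingEnd ℂ) c) * z i := by rw [hcc, one_mul]
      _ = ((‖z i‖ : ℝ) : ℂ) * c := by rw [mul_assoc, ← hkey]; ring


/-- The imaginarity-generating power of a `d×d` unitary `U`:
`Ī(U) = (d² − |Tr(U†U*)|²)/(2d(d+2))`. -/
def IGP {d : ℕ} (U : Matrix (Fin d) (Fin d) ℂ) : ℝ :=
  ((d : ℝ) ^ 2 - ‖(Uᴴ * U.map (starRingEnd ℂ)).trace‖ ^ 2) / (2 * d * (d + 2))

/-- **Positivity and faithfulness of the imaginarity-generating power.**
For every unitary `U`: `|Tr(U†U*)| ≤ d`, with equality iff `U = e^{iθ}·O` for some `θ ∈ ℝ`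
and real orthogonal `O`; consequently `Ī(U) ≥ 0`, with `Ī(U) = 0` iff `U` is a real
orthogonal matrix up to a global phase. -/
theorem IGP_positive_faithful
    (d : ℕ) (U : Matrix (Fin d) (Fin d) ℂ) (hU : U ∈ Matrix.unitaryGroup (Fin d) ℂ) :
    ‖(Uᴴ * U.map (starRingEnd ℂ)).trace‖ ≤ d ∧
    (‖(Uᴴ * U.map (starRingEnd ℂ)).trace‖ = d ↔
      ∃ (θ : ℝ) (O : Matrix (Fin d) (Fin d) ℝ), O ∈ Matrix.orthogonalGroup (Fin d) ℝ ∧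
        U = Complex.exp (θ * Complex.I) • O.map Complex.ofReal) ∧
    0 ≤ IGP U ∧
    (IGP U = 0 ↔
      ∃ (θ : ℝ) (O : Matrix (Fin d) (Fin d) ℝ), O ∈ Matrix.orthogonalGroup (Fin d) ℝ ∧
        U = Complex.exp (θ * Complex.I) • O.map Complex.ofReal) := by
  classical
  set z : Fin d × Fin d → ℂ := fun p => (U p.1 p.2) ^ 2 with hzdef
  have hT : (Uᴴ * U.map (starRingEnd ℂ)).trace = starRingEnd ℂ (∑ p, z p) := by
    rw [Matrix.trace]
    simp only [Matrix.diag, Matrix.mul_apply, Matrix.conjTranspose_apply,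
      Matrix.map_apply, hzdef, map_sum, map_pow]
    rw [Fintype.sum_prod_type]
    rw [Finset.sum_comm]
    congr 1; ext i; congr 1; ext j; simp [Complex.star_def, sq]
  have habsT : ‖(Uᴴ * U.map (starRingEnd ℂ)).trace‖ = ‖∑ p, z p‖ := by
    rw [hT, Complex.norm_conj]
  have hsum : ∑ p : Fin d × Fin d, ‖z p‖ = d := by
    have h1 : star U * U = 1 := Matrix.mem_unitaryGroup_iff'.mp hU
    have h2 : (star U * U).trace = (d : ℂ) := by
      rw [h1, Matrix.trace_one]; simp
    have h3 : ∑ p : Fin d × Fin d, ((Complex.normSq (U p.1 p.2) : ℝ) : ℂ) = (d : ℂ) := by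
      rw [← h2, Matrix.trace]
      simp only [Matrix.diag, Matrix.mul_apply, Matrix.star_apply]
      rw [Fintype.sum_prod_type, Finset.sum_comm]
      congr 1; ext i; congr 1; ext j
      exact Complex.normSq_eq_conj_mul_self
    have h4 : ∑ p : Fin d × Fin d, Complex.normSq (U p.1 p.2) = d := by
      exact_mod_cast h3
    calc ∑ p : Fin d × Fin d, ‖z p‖
        = ∑ p : Fin d × Fin d, Complex.normSq (U p.1 p.2) := by
          refine Finset.sum_congr rfl fun p _ => ?_
          rw [hzdef]; simp only [norm_pow, Complex.sq_norm]
      _ = d := h4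
  -- Part 1
  have key1 : ‖(Uᴴ * U.map (starRingEnd ℂ)).trace‖ ≤ d := by
    rw [habsT, ← hsum]
    exact norm_sum_le _ _
  -- Part 2
  have key2 : ‖(Uᴴ * U.map (starRingEnd ℂ)).trace‖ = d ↔
      ∃ (θ : ℝ) (O : Matrix (Fin d) (Fin d) ℝ), O ∈ Matrix.orthogonalGroup (Fin d) ℝ ∧
        U = Complex.exp (θ * Complex.I) • O.map Complex.ofReal := by
    constructor
    · intro h
      have h' : ‖∑ p, z p‖ = ∑ p, ‖z p‖ := by
        rw [← habsT, h, hsum]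
      obtain ⟨c, hc1, hcz⟩ := exists_phase z h'
      set θ : ℝ := c.arg / 2 with hθ
      have hcexp : Complex.exp ((θ : ℂ) * Complex.I) ^ 2 = c := by
        have h2 : ((2 : ℕ) : ℂ) * ((θ : ℂ) * Complex.I) = (c.arg : ℂ) * Complex.I := by
          push_cast [hθ]; ring
        rw [← Complex.exp_nat_mul, h2]
        have := Complex.norm_mul_exp_arg_mul_I c
        rw [hc1] at this
        simpa using this
      set e : ℂ := Complex.exp (-((θ : ℂ) * Complex.I)) with he
      have hee : e * Complex.exp ((θ : ℂ) * Complex.I) = 1 := by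
        rw [he, ← Complex.exp_add]
        simp
      have hsq : ∀ i j : Fin d, (e * U i j) ^ 2 = ((‖U i j‖ : ℝ) : ℂ) ^ 2 := by
        intro i j
        have hz2 : (U i j) ^ 2 = ((‖U i j‖ ^ 2 : ℝ) : ℂ) * c := by
          have := hcz (i, j)
          simpa [hzdef, map_pow, norm_pow] using this
        calc (e * U i j) ^ 2 = e ^ 2 * (U i j) ^ 2 := by ring
          _ = ((‖U i j‖ ^ 2 : ℝ) : ℂ) * (e ^ 2 * c) := by rw [hz2]; ring
          _ = ((‖U i j‖ : ℝ) : ℂ) ^ 2 := by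
              rw [← hcexp]
              have : e ^ 2 * Complex.exp ((θ : ℂ) * Complex.I) ^ 2 =
                  (e * Complex.exp ((θ : ℂ) * Complex.I)) ^ 2 := by ring
              rw [this, hee]
              push_cast; ring
      have him : ∀ i j : Fin d, (e * U i j).im = 0 := fun i j => sq_real_imp (hsq i j)
      set O : Matrix (Fin d) (Fin d) ℝ := Matrix.of fun i j => (e * U i j).re with hO
      have hmap : O.map Complex.ofReal = e • U := by
        ext i j
        simp only [Matrix.map_apply, Matrix.smul_apply, hO, Matrix.of_apply, smul_eq_mul]
        exact Complex.ext (by simp) (by simp [him i j])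
      have habse : ‖e‖ = 1 := by
        rw [he, Complex.norm_exp]
        simp
      have hVu : star (O.map Complex.ofReal) * O.map Complex.ofReal = 1 := by
        rw [hmap]
        have : star (e • U) = (starRingEnd ℂ) e • star U := by
          rw [star_smul]; rfl
        rw [this, Matrix.smul_mul, Matrix.mul_smul, smul_smul,
          Matrix.mem_unitaryGroup_iff'.mp hU]
        have : (starRingEnd ℂ) e * e = 1 := by
          rw [mul_comm, Complex.mul_conj]
          norm_cast
          rw [← Complex.sq_norm, habse]; ring
        rw [this, one_smul]
      have hOorth : O ∈ Matrix.orthogonalGroup (Fin d) ℝ := by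
        rw [Matrix.mem_orthogonalGroup_iff']
        ext i j
        have hij : (((star O * O) i j : ℝ) : ℂ) = (((1 : Matrix (Fin d) (Fin d) ℝ) i j : ℝ) : ℂ) := by
          have hl : (((star O * O) i j : ℝ) : ℂ) =
              (star (O.map Complex.ofReal) * O.map Complex.ofReal) i j := by
            simp [Matrix.mul_apply, Matrix.star_apply, Matrix.map_apply]
          rw [hl, hVu]
          simp [Matrix.one_apply]
          split <;> simp
        exact_mod_cast hij
      refine ⟨θ, O, hOorth, ?_⟩
      rw [hmap, smul_smul, mul_comm, hee, one_smul]
    · rintro ⟨θ, O, hOorth, hUeq⟩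
      set e : ℂ := Complex.exp ((θ : ℂ) * Complex.I) with he
      have habse : ‖e‖ = 1 := by
        rw [he, Complex.norm_exp]; simp
      have hz' : ∀ p : Fin d × Fin d, z p = e ^ 2 * ((O p.1 p.2 : ℝ) : ℂ) ^ 2 := by
        intro p
        simp only [hzdef, hUeq, Matrix.smul_apply, Matrix.map_apply, smul_eq_mul]
        ring
      have habsz : ∀ p : Fin d × Fin d, ‖z p‖ = (O p.1 p.2) ^ 2 := by
        intro p
        rw [hz', norm_mul, norm_pow, habse, norm_pow, Complex.norm_real, Real.norm_eq_abs]
        rw [one_pow, one_mul, sq_abs]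
      have hOsum : ∑ p : Fin d × Fin d, (O p.1 p.2) ^ 2 = d := by
        rw [← hsum]
        exact Finset.sum_congr rfl fun p _ => (habsz p).symm
      have hS : ∑ p, z p = e ^ 2 * (d : ℂ) := by
        rw [Finset.sum_congr rfl fun p _ => hz' p, ← Finset.mul_sum]
        congr 1
        exact_mod_cast hOsum
      rw [habsT, hS, norm_mul, norm_pow, habse]
      simp
  -- Parts 3,4
  have hanonneg : 0 ≤ ‖(Uᴴ * U.map (starRingEnd ℂ)).trace‖ := norm_nonneg _
  have key3 : 0 ≤ IGP U := by
    unfold IGP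
    apply div_nonneg
    · have := pow_le_pow_left₀ hanonneg key1 2
      linarith
    · positivity
  have key4 : IGP U = 0 ↔ ‖(Uᴴ * U.map (starRingEnd ℂ)).trace‖ = d := by
    by_cases hd : d = 0
    · subst hd
      have h0 : ‖(Uᴴ * U.map (starRingEnd ℂ)).trace‖ = 0 := by
        rw [habsT]
        simp
      constructor
      · intro _; rw [h0]; norm_num
      · intro _; unfold IGP; norm_num
    · have hden : (2 * (d : ℝ) * (d + 2)) ≠ 0 := by positivity
      unfold IGP
      rw [div_eq_zero_iff]
      constructor
      · rintro (hnum | hc)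
        · have h2 : ‖(Uᴴ * U.map (starRingEnd ℂ)).trace‖ ^ 2 = (d : ℝ) ^ 2 := by
            linarith
          exact (pow_left_inj₀ hanonneg (by positivity : (0:ℝ) ≤ (d:ℝ)) two_ne_zero).mp h2
        · exact absurd hc hden
      · intro h
        left
        rw [h]; ring
  exact ⟨key1, key2, key3, key4.trans key2⟩
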